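/- Assume A is symmetric positive definite and the combined injectivity condition holds: for all u ∈ ℝᵐ and λ ∈ ℝᵖ, B·u + C·λ = 0 implies u = 0 and λ = 0. Then the (m+p)×(m+p) block matrix M = [[Bᵀ·A⁻¹·B, Bᵀ·A⁻¹·C], [Cᵀ·A⁻¹·B, Cᵀ·A⁻¹·C]] is symmetric positive definite. -/

import Mathlib

open Matrix

/-- The condensed block matrix `[[BᵀA⁻¹B, BᵀA⁻¹C], [CᵀA⁻¹B, CᵀA⁻¹C]]` is
symmetric positive definite. -/
theorem condensed_matrix_posDef (n m p : ℕ)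
    (A : Matrix (Fin n) (Fin n) ℝ) (B : Matrix (Fin n) (Fin m) ℝ)
    (C : Matrix (Fin n) (Fin p) ℝ)
    (hAsymm : Aᵀ = A)
    (hApos : ∀ x : Fin n → ℝ, x ≠ 0 → 0 < x ⬝ᵥ (A *ᵥ x))
    (hBC : ∀ (u : Fin m → ℝ) (lam : Fin p → ℝ),
      B *ᵥ u + C *ᵥ lam = 0 → u = 0 ∧ lam = 0) :
    (Matrix.fromBlocks (Bᵀ * A⁻¹ * B) (Bᵀ * A⁻¹ * C)
        (Cᵀ * A⁻¹ * B) (Cᵀ * A⁻¹ * C))ᵀ =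
      Matrix.fromBlocks (Bᵀ * A⁻¹ * B) (Bᵀ * A⁻¹ * C)
        (Cᵀ * A⁻¹ * B) (Cᵀ * A⁻¹ * C) ∧
    ∀ x : (Fin m ⊕ Fin p) → ℝ, x ≠ 0 →
      0 < x ⬝ᵥ ((Matrix.fromBlocks (Bᵀ * A⁻¹ * B) (Bᵀ * A⁻¹ * C)
        (Cᵀ * A⁻¹ * B) (Cᵀ * A⁻¹ * C)) *ᵥ x) := by
  have hA : A.PosDef := by
    refine Matrix.PosDef.of_dotProduct_mulVec_pos ?_ ?_
    · exact Matrix.isHermitian_iff_isSymm.2 hAsymm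
    · intro x hx
      simpa using hApos x hx
  have hAinv : (A⁻¹).PosDef := hA.inv
  have hAinvSymm : (A⁻¹)ᵀ = A⁻¹ := by
    have := hAinv.1
    exact Matrix.isHermitian_iff_isSymm.1 this
  set D : Matrix (Fin n) (Fin m ⊕ Fin p) ℝ := Matrix.fromCols B C with hD
  have hM : Matrix.fromBlocks (Bᵀ * A⁻¹ * B) (Bᵀ * A⁻¹ * C)
      (Cᵀ * A⁻¹ * B) (Cᵀ * A⁻¹ * C) = Dᵀ * A⁻¹ * D := by
    rw [hD, Matrix.transpose_fromCols, Matrix.fromRows_mul,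
      Matrix.fromRows_mul_fromCols]
  rw [hM]
  constructor
  · rw [Matrix.transpose_mul, Matrix.transpose_mul, Matrix.transpose_transpose,
      hAinvSymm, Matrix.mul_assoc]
  · intro x hx
    have hDx : D *ᵥ x ≠ 0 := by
      intro h
      have hx' : D *ᵥ Sum.elim (x ∘ Sum.inl) (x ∘ Sum.inr) = 0 := by
        simpa [Sum.elim_comp_inl_inr] using h
      rw [hD, Matrix.fromCols_mulVec_sumElim] at hx'
      obtain ⟨h1, h2⟩ := hBC _ _ hx'
      apply hx
      funext i
      cases i with
      | inl i => exact congrFun h1 i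
      | inr i => exact congrFun h2 i
    have key : x ⬝ᵥ ((Dᵀ * A⁻¹ * D) *ᵥ x) = (D *ᵥ x) ⬝ᵥ (A⁻¹ *ᵥ (D *ᵥ x)) := by
      rw [← Matrix.mulVec_mulVec, ← Matrix.mulVec_mulVec,
        Matrix.dotProduct_mulVec, Matrix.vecMul_transpose]
    rw [key]
    simpa using hAinv.dotProduct_mulVec_pos hDx
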